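/- The singular function q₁(x) = Γ(x−p₁)e₁ − Γ(x−p₂)e₁ + α₂ a ((x−p₁)/|x−p₁|² + (x−p₂)/|x−p₂|²) is a solution of the Lamé system μΔq₁ + (λ+μ)∇(∇·q₁) = 0 on ℝ² \ {p₁, p₂} and satisfies |q₁(x)| = O(|x|^{-1}) as |x| → ∞. -/

import Mathlib

open Real

/-- Partial derivative in the `j`-th coordinate direction of a function on `ℝ × ℝ`. -/
noncomputable def pd (j : Fin 2) (f : ℝ × ℝ → ℝ) (p : ℝ × ℝ) : ℝ :=
  if j = 0 then deriv (fun t => f (t, p.2)) p.1 else deriv (fun t => f (p.1, t)) p.2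

/-- The `j`-th coordinate of a point of `ℝ × ℝ`. -/
def co (j : Fin 2) (p : ℝ × ℝ) : ℝ := if j = 0 then p.1 else p.2

/-- The squared Euclidean norm on `ℝ × ℝ`. -/
def nsq (p : ℝ × ℝ) : ℝ := p.1 ^ 2 + p.2 ^ 2

/-- The Kelvin matrix `Γ_{ij}(x) = α₁ δ_{ij} ln|x| − α₂ x_i x_j / |x|²`. -/
noncomputable def Gam (α₁ α₂ : ℝ) (i j : Fin 2) (p : ℝ × ℝ) : ℝ :=
  α₁ * (if i = j then 1 else 0) * Real.log (Real.sqrt (nsq p)) - α₂ * co i p * co j p / nsq p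

/-- Components of the singular function
`q₁(x) = Γ(x−p₁)e₁ − Γ(x−p₂)e₁ + α₂ a ((x−p₁)/|x−p₁|² + (x−p₂)/|x−p₂|²)`,
with `p₁ = (−a,0)`, `p₂ = (a,0)`. -/
noncomputable def q1c (α₁ α₂ a : ℝ) (i : Fin 2) (p : ℝ × ℝ) : ℝ :=
  Gam α₁ α₂ i 0 (p.1 + a, p.2) - Gam α₁ α₂ i 0 (p.1 - a, p.2)
    + α₂ * a * (co i (p.1 + a, p.2) / nsq (p.1 + a, p.2)
        + co i (p.1 - a, p.2) / nsq (p.1 - a, p.2))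

/-! ### Auxiliary block functions and their derivatives -/

noncomputable def sgG0 (c1 c2 c3 s y : ℝ) : ℝ :=
  c1 * Real.log (s^2 + y^2) / 2 + c2 * s^2 / (s^2 + y^2) + c3 * s / (s^2 + y^2)

noncomputable def sgG1 (c2 c3 s y : ℝ) : ℝ :=
  c2 * s * y / (s^2 + y^2) + c3 * y / (s^2 + y^2)

noncomputable def sgG0s (c1 c2 c3 s y : ℝ) : ℝ :=
  c1 * s / (s^2 + y^2) + 2*c2*s*y^2 / (s^2+y^2)^2 + c3 * (y^2 - s^2) / (s^2+y^2)^2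

noncomputable def sgG0y (c1 c2 c3 s y : ℝ) : ℝ :=
  c1 * y / (s^2 + y^2) - 2*c2*s^2*y / (s^2+y^2)^2 - 2*c3*s*y / (s^2+y^2)^2

noncomputable def sgG1s (c2 c3 s y : ℝ) : ℝ :=
  c2*y*(y^2 - s^2) / (s^2+y^2)^2 - 2*c3*s*y / (s^2+y^2)^2

noncomputable def sgG1y (c2 c3 s y : ℝ) : ℝ :=
  c2*s*(s^2 - y^2) / (s^2+y^2)^2 + c3*(s^2 - y^2) / (s^2+y^2)^2

noncomputable def sgH1 (c1 c2 c3 s y : ℝ) : ℝ :=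
  c1*(y^2-s^2)/(s^2+y^2)^2 + 2*c2*y^2*((s^2+y^2)-4*s^2)/(s^2+y^2)^3
    - 2*c3*s*(3*y^2-s^2)/(s^2+y^2)^3

noncomputable def sgH2 (c1 c2 c3 s y : ℝ) : ℝ :=
  c1*(s^2-y^2)/(s^2+y^2)^2 - (2*c2*s^2+2*c3*s)*((s^2+y^2)-4*y^2)/(s^2+y^2)^3

noncomputable def sgH3 (c2 c3 s y : ℝ) : ℝ :=
  -2*c2*s*y*(3*y^2-s^2)/(s^2+y^2)^3 - 2*c3*y*((s^2+y^2)-4*s^2)/(s^2+y^2)^3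

noncomputable def sgH4 (c2 c3 s y : ℝ) : ℝ :=
  -2*y*(c2*s+c3)*(3*s^2-y^2)/(s^2+y^2)^3

noncomputable def sgH5 (c1 c2 c3 s y : ℝ) : ℝ :=
  -2*c1*s*y/(s^2+y^2)^2 + 4*c2*s*y*(s^2-y^2)/(s^2+y^2)^3 + 2*c3*y*(3*s^2-y^2)/(s^2+y^2)^3

noncomputable def sgH6 (c2 c3 s y : ℝ) : ℝ :=
  c2*(s^2-y^2)/(s^2+y^2)^2 + 2*s*(c2*s+c3)*(3*y^2-s^2)/(s^2+y^2)^3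

lemma sg_hG0s (c1 c2 c3 y s : ℝ) (h : s^2 + y^2 ≠ 0) :
    HasDerivAt (fun t => sgG0 c1 c2 c3 t y) (sgG0s c1 c2 c3 s y) s := by
  have hr : HasDerivAt (fun t : ℝ => t^2 + y^2) (2*s) s := by
    simpa using (hasDerivAt_pow 2 s).add_const (y^2)
  have h1 := ((hr.log h).const_mul c1).div_const 2
  have h2 := ((hasDerivAt_pow 2 s).const_mul c2).div hr h
  have h3 := ((hasDerivAt_id s).const_mul c3).div hr h
  have H := (h1.add h2).add h3
  refine H.congr_deriv ?_
  simp only [sgG0s, id]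
  field_simp
  ring

lemma sg_hG0y (c1 c2 c3 s y : ℝ) (h : s^2 + y^2 ≠ 0) :
    HasDerivAt (fun t => sgG0 c1 c2 c3 s t) (sgG0y c1 c2 c3 s y) y := by
  have hr : HasDerivAt (fun t : ℝ => s^2 + t^2) (2*y) y := by
    simpa using (hasDerivAt_pow 2 y).const_add (s^2)
  have h1 := ((hr.log h).const_mul c1).div_const 2
  have h2 := (hasDerivAt_const y (c2 * s^2)).div hr h
  have h3 := (hasDerivAt_const y (c3 * s)).div hr h
  have H := (h1.add h2).add h3
  refine H.congr_deriv ?_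
  simp only [sgG0y, id]
  field_simp
  ring

lemma sg_hG1s (c2 c3 y s : ℝ) (h : s^2 + y^2 ≠ 0) :
    HasDerivAt (fun t => sgG1 c2 c3 t y) (sgG1s c2 c3 s y) s := by
  have hr : HasDerivAt (fun t : ℝ => t^2 + y^2) (2*s) s := by
    simpa using (hasDerivAt_pow 2 s).add_const (y^2)
  have h1 := (((hasDerivAt_id s).const_mul c2).mul_const y).div hr h
  have h2 := (hasDerivAt_const s (c3 * y)).div hr h
  have H := h1.add h2
  refine H.congr_deriv ?_
  simp only [sgG1s, id]
  field_simp
  ring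

lemma sg_hG1y (c2 c3 s y : ℝ) (h : s^2 + y^2 ≠ 0) :
    HasDerivAt (fun t => sgG1 c2 c3 s t) (sgG1y c2 c3 s y) y := by
  have hr : HasDerivAt (fun t : ℝ => s^2 + t^2) (2*y) y := by
    simpa using (hasDerivAt_pow 2 y).const_add (s^2)
  have h1 := (((hasDerivAt_id y).const_mul (c2 * s))).div hr h
  have h2 := ((hasDerivAt_id y).const_mul c3).div hr h
  have H := h1.add h2
  refine H.congr_deriv ?_
  simp only [sgG1y, id]
  field_simp
  ring

lemma sg_hH1 (c1 c2 c3 y s : ℝ) (h : s^2 + y^2 ≠ 0) :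
    HasDerivAt (fun t => sgG0s c1 c2 c3 t y) (sgH1 c1 c2 c3 s y) s := by
  have hr : HasDerivAt (fun t : ℝ => t^2 + y^2) (2*s) s := by
    simpa using (hasDerivAt_pow 2 s).add_const (y^2)
  have hr2 : HasDerivAt (fun t : ℝ => (t^2 + y^2)^2) (2*(s^2+y^2)^1*(2*s)) s := hr.pow 2
  have h2 := pow_ne_zero 2 h
  have h1 := ((hasDerivAt_id s).const_mul c1).div hr h
  have hb := (((hasDerivAt_id s).const_mul (2*c2)).mul_const (y^2)).div hr2 h2
  have hc := (((hasDerivAt_pow 2 s).const_sub (y^2)).const_mul c3).div hr2 h2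
  have H := (h1.add hb).add hc
  refine H.congr_deriv ?_
  simp only [sgH1, id]
  field_simp
  ring

lemma sg_hH2 (c1 c2 c3 s y : ℝ) (h : s^2 + y^2 ≠ 0) :
    HasDerivAt (fun t => sgG0y c1 c2 c3 s t) (sgH2 c1 c2 c3 s y) y := by
  have hr : HasDerivAt (fun t : ℝ => s^2 + t^2) (2*y) y := by
    simpa using (hasDerivAt_pow 2 y).const_add (s^2)
  have hr2 : HasDerivAt (fun t : ℝ => (s^2 + t^2)^2) (2*(s^2+y^2)^1*(2*y)) y := hr.pow 2
  have h2 := pow_ne_zero 2 h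
  have h1 := ((hasDerivAt_id y).const_mul c1).div hr h
  have hb := ((hasDerivAt_id y).const_mul (2*c2*s^2)).div hr2 h2
  have hc := ((hasDerivAt_id y).const_mul (2*c3*s)).div hr2 h2
  have H := (h1.sub hb).sub hc
  refine H.congr_deriv ?_
  simp only [sgH2, id]
  field_simp
  ring

lemma sg_hH3 (c2 c3 y s : ℝ) (h : s^2 + y^2 ≠ 0) :
    HasDerivAt (fun t => sgG1s c2 c3 t y) (sgH3 c2 c3 s y) s := by
  have hr : HasDerivAt (fun t : ℝ => t^2 + y^2) (2*s) s := by
    simpa using (hasDerivAt_pow 2 s).add_const (y^2)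
  have hr2 : HasDerivAt (fun t : ℝ => (t^2 + y^2)^2) (2*(s^2+y^2)^1*(2*s)) s := hr.pow 2
  have h2 := pow_ne_zero 2 h
  have ha := (((hasDerivAt_pow 2 s).const_sub (y^2)).const_mul (c2*y)).div hr2 h2
  have hb := ((((hasDerivAt_id s).const_mul (2*c3)).mul_const y)).div hr2 h2
  have H := ha.sub hb
  refine H.congr_deriv ?_
  simp only [sgH3, id]
  field_simp
  ring

lemma sg_hH4 (c2 c3 s y : ℝ) (h : s^2 + y^2 ≠ 0) :
    HasDerivAt (fun t => sgG1y c2 c3 s t) (sgH4 c2 c3 s y) y := by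
  have hr : HasDerivAt (fun t : ℝ => s^2 + t^2) (2*y) y := by
    simpa using (hasDerivAt_pow 2 y).const_add (s^2)
  have hr2 : HasDerivAt (fun t : ℝ => (s^2 + t^2)^2) (2*(s^2+y^2)^1*(2*y)) y := hr.pow 2
  have h2 := pow_ne_zero 2 h
  have ha := (((hasDerivAt_pow 2 y).const_sub (s^2)).const_mul (c2*s)).div hr2 h2
  have hb := (((hasDerivAt_pow 2 y).const_sub (s^2)).const_mul c3).div hr2 h2
  have H := ha.add hb
  refine H.congr_deriv ?_
  simp only [sgH4, id]
  field_simp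
  ring

lemma sg_hH5 (c1 c2 c3 s y : ℝ) (h : s^2 + y^2 ≠ 0) :
    HasDerivAt (fun t => sgG0s c1 c2 c3 s t) (sgH5 c1 c2 c3 s y) y := by
  have hr : HasDerivAt (fun t : ℝ => s^2 + t^2) (2*y) y := by
    simpa using (hasDerivAt_pow 2 y).const_add (s^2)
  have hr2 : HasDerivAt (fun t : ℝ => (s^2 + t^2)^2) (2*(s^2+y^2)^1*(2*y)) y := hr.pow 2
  have h2 := pow_ne_zero 2 h
  have ha := (hasDerivAt_const y (c1*s)).div hr h
  have hb := ((hasDerivAt_pow 2 y).const_mul (2*c2*s)).div hr2 h2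
  have hc := (((hasDerivAt_pow 2 y).sub_const (s^2)).const_mul c3).div hr2 h2
  have H := (ha.add hb).add hc
  refine H.congr_deriv ?_
  simp only [sgH5, id]
  field_simp
  ring

lemma sg_hH6 (c2 c3 y s : ℝ) (h : s^2 + y^2 ≠ 0) :
    HasDerivAt (fun t => sgG1y c2 c3 t y) (sgH6 c2 c3 s y) s := by
  have hr : HasDerivAt (fun t : ℝ => t^2 + y^2) (2*s) s := by
    simpa using (hasDerivAt_pow 2 s).add_const (y^2)
  have hr2 : HasDerivAt (fun t : ℝ => (t^2 + y^2)^2) (2*(s^2+y^2)^1*(2*s)) s := hr.pow 2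
  have h2 := pow_ne_zero 2 h
  have ha := (((hasDerivAt_id s).const_mul c2).mul ((hasDerivAt_pow 2 s).sub_const (y^2))).div hr2 h2
  have hb := (((hasDerivAt_pow 2 s).sub_const (y^2)).const_mul c3).div hr2 h2
  have H := ha.add hb
  refine H.congr_deriv ?_
  simp only [sgH6, id, Pi.mul_apply]
  field_simp
  ring

/-! ### Lamé identities for a single block -/

lemma sg_lame0 (lam mu c1 c2 c3 s y : ℝ) (h : s^2 + y^2 ≠ 0)
    (hc : 2*mu*c2 + (lam+mu)*(c1+c2) = 0) :
    mu * (sgH1 c1 c2 c3 s y + sgH2 c1 c2 c3 s y)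
      + (lam+mu) * (sgH1 c1 c2 c3 s y + sgH6 c2 c3 s y) = 0 := by
  have e1 : mu * (sgH1 c1 c2 c3 s y + sgH2 c1 c2 c3 s y)
      = 2*mu*c2*(y^2-s^2)/(s^2+y^2)^2 := by
    simp only [sgH1, sgH2]; field_simp; ring
  have e2 : sgH1 c1 c2 c3 s y + sgH6 c2 c3 s y
      = (c1+c2)*(y^2-s^2)/(s^2+y^2)^2 := by
    simp only [sgH1, sgH6]; field_simp; ring
  have key : 2*mu*c2*(y^2-s^2) + (lam+mu)*((c1+c2)*(y^2-s^2)) = 0 := by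
    linear_combination (y^2-s^2) * hc
  calc mu * (sgH1 c1 c2 c3 s y + sgH2 c1 c2 c3 s y)
      + (lam+mu) * (sgH1 c1 c2 c3 s y + sgH6 c2 c3 s y)
      = (2*mu*c2*(y^2-s^2) + (lam+mu)*((c1+c2)*(y^2-s^2)))/(s^2+y^2)^2 := by
        rw [e1, e2]; ring
    _ = 0 := by rw [key, zero_div]

lemma sg_lame1 (lam mu c1 c2 c3 s y : ℝ) (h : s^2 + y^2 ≠ 0)
    (hc : 2*mu*c2 + (lam+mu)*(c1+c2) = 0) :
    mu * (sgH3 c2 c3 s y + sgH4 c2 c3 s y)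
      + (lam+mu) * (sgH5 c1 c2 c3 s y + sgH4 c2 c3 s y) = 0 := by
  have e1 : mu * (sgH3 c2 c3 s y + sgH4 c2 c3 s y)
      = -(4*mu*c2*s*y)/(s^2+y^2)^2 := by
    simp only [sgH3, sgH4]; field_simp; ring
  have e2 : sgH5 c1 c2 c3 s y + sgH4 c2 c3 s y
      = -(2*(c1+c2)*s*y)/(s^2+y^2)^2 := by
    simp only [sgH5, sgH4]; field_simp; ring
  have key : (-(4*mu*c2*s*y)) + (lam+mu)*(-(2*(c1+c2)*s*y)) = 0 := by
    linear_combination (-(2*s*y)) * hc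
  calc mu * (sgH3 c2 c3 s y + sgH4 c2 c3 s y)
      + (lam+mu) * (sgH5 c1 c2 c3 s y + sgH4 c2 c3 s y)
      = ((-(4*mu*c2*s*y)) + (lam+mu)*(-(2*(c1+c2)*s*y)))/(s^2+y^2)^2 := by
        rw [e1, e2]; ring
    _ = 0 := by rw [key, zero_div]

/-! ### Shift lemmas and pd congruence -/

lemma sg_shift {F : ℝ → ℝ} {v x b : ℝ} (h : HasDerivAt F v (x+b)) :
    HasDerivAt (fun t => F (t+b)) v x := by
  have := h.comp x ((hasDerivAt_id x).add_const b)
  rw [mul_one] at this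
  exact this

lemma sg_shift' {F : ℝ → ℝ} {v x b : ℝ} (h : HasDerivAt F v (x-b)) :
    HasDerivAt (fun t => F (t-b)) v x := by
  have := h.comp x ((hasDerivAt_id x).sub_const b)
  rw [mul_one] at this
  exact this

lemma sg_pd_congr (j : Fin 2) {f g : ℝ × ℝ → ℝ} {p : ℝ × ℝ}
    (h : f =ᶠ[nhds p] g) : pd j f p = pd j g p := by
  fin_cases j
  · show (if (0 : Fin 2) = 0 then _ else _) = (if (0 : Fin 2) = 0 then _ else _)
    rw [if_pos rfl, if_pos rfl]
    apply Filter.EventuallyEq.deriv_eq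
    have hc : ContinuousAt (fun t : ℝ => ((t, p.2) : ℝ × ℝ)) p.1 := by fun_prop
    have ht : Filter.Tendsto (fun t : ℝ => ((t, p.2) : ℝ × ℝ)) (nhds p.1) (nhds p) := by
      exact hc
    exact ht.eventually h
  · show (if (1 : Fin 2) = 0 then _ else _) = (if (1 : Fin 2) = 0 then _ else _)
    rw [if_neg (by decide), if_neg (by decide)]
    apply Filter.EventuallyEq.deriv_eq
    have hc : ContinuousAt (fun t : ℝ => ((p.1, t) : ℝ × ℝ)) p.2 := by fun_prop
    have ht : Filter.Tendsto (fun t : ℝ => ((p.1, t) : ℝ × ℝ)) (nhds p.2) (nhds p) := by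
      exact hc
    exact ht.eventually h

/-! ### Rewriting q1c -/

lemma sg_q1c0 (α₁ α₂ a : ℝ) :
    q1c α₁ α₂ a 0
      = fun p : ℝ × ℝ => sgG0 α₁ (-α₂) (α₂*a) (p.1+a) p.2
          + sgG0 (-α₁) α₂ (α₂*a) (p.1-a) p.2 := by
  funext p
  have h1 : (0:ℝ) ≤ (p.1+a)^2 + p.2^2 := by positivity
  have h2 : (0:ℝ) ≤ (p.1-a)^2 + p.2^2 := by positivity
  simp only [q1c, Gam, co, nsq, sgG0, reduceIte]
  rw [Real.log_sqrt h1, Real.log_sqrt h2]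
  ring

lemma sg_q1c1 (α₁ α₂ a : ℝ) :
    q1c α₁ α₂ a 1
      = fun p : ℝ × ℝ => sgG1 (-α₂) (α₂*a) (p.1+a) p.2
          + sgG1 α₂ (α₂*a) (p.1-a) p.2 := by
  funext p
  simp only [q1c, Gam, co, nsq, sgG1, reduceIte, one_ne_zero, Fin.one_eq_zero_iff]
  norm_num
  ring

/-! ### pointwise pd computations for two-center sums -/

lemma sgp_pd0_G0 (a c1 c2 c3 d1 d2 d3 : ℝ) (q : ℝ × ℝ)
    (h1 : (q.1+a)^2 + q.2^2 ≠ 0) (h2 : (q.1-a)^2 + q.2^2 ≠ 0) :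
    pd 0 (fun r : ℝ × ℝ => sgG0 c1 c2 c3 (r.1+a) r.2 + sgG0 d1 d2 d3 (r.1-a) r.2) q
      = sgG0s c1 c2 c3 (q.1+a) q.2 + sgG0s d1 d2 d3 (q.1-a) q.2 := by
  have HA := sg_shift (sg_hG0s c1 c2 c3 q.2 (q.1+a) h1)
  have HB := sg_shift' (sg_hG0s d1 d2 d3 q.2 (q.1-a) h2)
  show (if (0 : Fin 2) = 0 then _ else _) = _
  rw [if_pos rfl]
  exact (HA.add HB).deriv

lemma sgp_pd1_G0 (a c1 c2 c3 d1 d2 d3 : ℝ) (q : ℝ × ℝ)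
    (h1 : (q.1+a)^2 + q.2^2 ≠ 0) (h2 : (q.1-a)^2 + q.2^2 ≠ 0) :
    pd 1 (fun r : ℝ × ℝ => sgG0 c1 c2 c3 (r.1+a) r.2 + sgG0 d1 d2 d3 (r.1-a) r.2) q
      = sgG0y c1 c2 c3 (q.1+a) q.2 + sgG0y d1 d2 d3 (q.1-a) q.2 := by
  have HA := sg_hG0y c1 c2 c3 (q.1+a) q.2 h1
  have HB := sg_hG0y d1 d2 d3 (q.1-a) q.2 h2
  show (if (1 : Fin 2) = 0 then _ else _) = _
  rw [if_neg (by decide)]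
  exact (HA.add HB).deriv

lemma sgp_pd0_G1 (a c2 c3 d2 d3 : ℝ) (q : ℝ × ℝ)
    (h1 : (q.1+a)^2 + q.2^2 ≠ 0) (h2 : (q.1-a)^2 + q.2^2 ≠ 0) :
    pd 0 (fun r : ℝ × ℝ => sgG1 c2 c3 (r.1+a) r.2 + sgG1 d2 d3 (r.1-a) r.2) q
      = sgG1s c2 c3 (q.1+a) q.2 + sgG1s d2 d3 (q.1-a) q.2 := by
  have HA := sg_shift (sg_hG1s c2 c3 q.2 (q.1+a) h1)
  have HB := sg_shift' (sg_hG1s d2 d3 q.2 (q.1-a) h2)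
  show (if (0 : Fin 2) = 0 then _ else _) = _
  rw [if_pos rfl]
  exact (HA.add HB).deriv

lemma sgp_pd1_G1 (a c2 c3 d2 d3 : ℝ) (q : ℝ × ℝ)
    (h1 : (q.1+a)^2 + q.2^2 ≠ 0) (h2 : (q.1-a)^2 + q.2^2 ≠ 0) :
    pd 1 (fun r : ℝ × ℝ => sgG1 c2 c3 (r.1+a) r.2 + sgG1 d2 d3 (r.1-a) r.2) q
      = sgG1y c2 c3 (q.1+a) q.2 + sgG1y d2 d3 (q.1-a) q.2 := by
  have HA := sg_hG1y c2 c3 (q.1+a) q.2 h1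
  have HB := sg_hG1y d2 d3 (q.1-a) q.2 h2
  show (if (1 : Fin 2) = 0 then _ else _) = _
  rw [if_neg (by decide)]
  exact (HA.add HB).deriv

lemma sgp_pd0_G0s (a c1 c2 c3 d1 d2 d3 : ℝ) (q : ℝ × ℝ)
    (h1 : (q.1+a)^2 + q.2^2 ≠ 0) (h2 : (q.1-a)^2 + q.2^2 ≠ 0) :
    pd 0 (fun r : ℝ × ℝ => sgG0s c1 c2 c3 (r.1+a) r.2 + sgG0s d1 d2 d3 (r.1-a) r.2) q
      = sgH1 c1 c2 c3 (q.1+a) q.2 + sgH1 d1 d2 d3 (q.1-a) q.2 := by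
  have HA := sg_shift (sg_hH1 c1 c2 c3 q.2 (q.1+a) h1)
  have HB := sg_shift' (sg_hH1 d1 d2 d3 q.2 (q.1-a) h2)
  show (if (0 : Fin 2) = 0 then _ else _) = _
  rw [if_pos rfl]
  exact (HA.add HB).deriv

lemma sgp_pd1_G0y (a c1 c2 c3 d1 d2 d3 : ℝ) (q : ℝ × ℝ)
    (h1 : (q.1+a)^2 + q.2^2 ≠ 0) (h2 : (q.1-a)^2 + q.2^2 ≠ 0) :
    pd 1 (fun r : ℝ × ℝ => sgG0y c1 c2 c3 (r.1+a) r.2 + sgG0y d1 d2 d3 (r.1-a) r.2) q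
      = sgH2 c1 c2 c3 (q.1+a) q.2 + sgH2 d1 d2 d3 (q.1-a) q.2 := by
  have HA := sg_hH2 c1 c2 c3 (q.1+a) q.2 h1
  have HB := sg_hH2 d1 d2 d3 (q.1-a) q.2 h2
  show (if (1 : Fin 2) = 0 then _ else _) = _
  rw [if_neg (by decide)]
  exact (HA.add HB).deriv

lemma sgp_pd0_G1s (a c2 c3 d2 d3 : ℝ) (q : ℝ × ℝ)
    (h1 : (q.1+a)^2 + q.2^2 ≠ 0) (h2 : (q.1-a)^2 + q.2^2 ≠ 0) :
    pd 0 (fun r : ℝ × ℝ => sgG1s c2 c3 (r.1+a) r.2 + sgG1s d2 d3 (r.1-a) r.2) q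
      = sgH3 c2 c3 (q.1+a) q.2 + sgH3 d2 d3 (q.1-a) q.2 := by
  have HA := sg_shift (sg_hH3 c2 c3 q.2 (q.1+a) h1)
  have HB := sg_shift' (sg_hH3 d2 d3 q.2 (q.1-a) h2)
  show (if (0 : Fin 2) = 0 then _ else _) = _
  rw [if_pos rfl]
  exact (HA.add HB).deriv

lemma sgp_pd1_G1y (a c2 c3 d2 d3 : ℝ) (q : ℝ × ℝ)
    (h1 : (q.1+a)^2 + q.2^2 ≠ 0) (h2 : (q.1-a)^2 + q.2^2 ≠ 0) :
    pd 1 (fun r : ℝ × ℝ => sgG1y c2 c3 (r.1+a) r.2 + sgG1y d2 d3 (r.1-a) r.2) q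
      = sgH4 c2 c3 (q.1+a) q.2 + sgH4 d2 d3 (q.1-a) q.2 := by
  have HA := sg_hH4 c2 c3 (q.1+a) q.2 h1
  have HB := sg_hH4 d2 d3 (q.1-a) q.2 h2
  show (if (1 : Fin 2) = 0 then _ else _) = _
  rw [if_neg (by decide)]
  exact (HA.add HB).deriv

lemma sgp_pd0_div (a c1 c2 c3 d1 d2 d3 : ℝ) (q : ℝ × ℝ)
    (h1 : (q.1+a)^2 + q.2^2 ≠ 0) (h2 : (q.1-a)^2 + q.2^2 ≠ 0) :
    pd 0 (fun r : ℝ × ℝ => (sgG0s c1 c2 c3 (r.1+a) r.2 + sgG0s d1 d2 d3 (r.1-a) r.2)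
        + (sgG1y c2 c3 (r.1+a) r.2 + sgG1y d2 d3 (r.1-a) r.2)) q
      = (sgH1 c1 c2 c3 (q.1+a) q.2 + sgH1 d1 d2 d3 (q.1-a) q.2)
        + (sgH6 c2 c3 (q.1+a) q.2 + sgH6 d2 d3 (q.1-a) q.2) := by
  have HA := sg_shift (sg_hH1 c1 c2 c3 q.2 (q.1+a) h1)
  have HB := sg_shift' (sg_hH1 d1 d2 d3 q.2 (q.1-a) h2)
  have HC := sg_shift (sg_hH6 c2 c3 q.2 (q.1+a) h1)
  have HD := sg_shift' (sg_hH6 d2 d3 q.2 (q.1-a) h2)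
  show (if (0 : Fin 2) = 0 then _ else _) = _
  rw [if_pos rfl]
  exact ((HA.add HB).add (HC.add HD)).deriv

lemma sgp_pd1_div (a c1 c2 c3 d1 d2 d3 : ℝ) (q : ℝ × ℝ)
    (h1 : (q.1+a)^2 + q.2^2 ≠ 0) (h2 : (q.1-a)^2 + q.2^2 ≠ 0) :
    pd 1 (fun r : ℝ × ℝ => (sgG0s c1 c2 c3 (r.1+a) r.2 + sgG0s d1 d2 d3 (r.1-a) r.2)
        + (sgG1y c2 c3 (r.1+a) r.2 + sgG1y d2 d3 (r.1-a) r.2)) q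
      = (sgH5 c1 c2 c3 (q.1+a) q.2 + sgH5 d1 d2 d3 (q.1-a) q.2)
        + (sgH4 c2 c3 (q.1+a) q.2 + sgH4 d2 d3 (q.1-a) q.2) := by
  have HA := sg_hH5 c1 c2 c3 (q.1+a) q.2 h1
  have HB := sg_hH5 d1 d2 d3 (q.1-a) q.2 h2
  have HC := sg_hH4 c2 c3 (q.1+a) q.2 h1
  have HD := sg_hH4 d2 d3 (q.1-a) q.2 h2
  show (if (1 : Fin 2) = 0 then _ else _) = _
  rw [if_neg (by decide)]
  exact ((HA.add HB).add (HC.add HD)).deriv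

set_option maxHeartbeats 1000000 in
lemma sg_pde (lam mu α₁ α₂ a : ℝ) (hmu : 0 < mu) (hlm : 0 < lam + mu) (ha : 0 < a)
    (hα₁ : α₁ = (1 / (4 * π)) * (1 / mu + 1 / (lam + 2 * mu)))
    (hα₂ : α₂ = (1 / (4 * π)) * (1 / mu - 1 / (lam + 2 * mu))) :
    ∀ p : ℝ × ℝ, p ≠ ((-a : ℝ), (0 : ℝ)) → p ≠ ((a : ℝ), (0 : ℝ)) → ∀ i : Fin 2,
        mu * (pd 0 (pd 0 (q1c α₁ α₂ a i)) p + pd 1 (pd 1 (q1c α₁ α₂ a i)) p)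
          + (lam + mu)
            * pd i (fun q => pd 0 (q1c α₁ α₂ a 0) q + pd 1 (q1c α₁ α₂ a 1) q) p = 0 := by
    intro p hp1 hp2 i
    have h1 : (p.1+a)^2 + p.2^2 ≠ 0 := by
      intro h
      apply hp1
      have hx : p.1 = -a := by nlinarith [sq_nonneg (p.1+a), sq_nonneg p.2]
      have hy : p.2 = 0 := by nlinarith [sq_nonneg (p.1+a), sq_nonneg p.2]
      rw [Prod.ext_iff]
      exact ⟨hx, hy⟩
    have h2 : (p.1-a)^2 + p.2^2 ≠ 0 := by
      intro h
      apply hp2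
      have hx : p.1 = a := by nlinarith [sq_nonneg (p.1-a), sq_nonneg p.2]
      have hy : p.2 = 0 := by nlinarith [sq_nonneg (p.1-a), sq_nonneg p.2]
      rw [Prod.ext_iff]
      exact ⟨hx, hy⟩
    have hl2 : lam + 2*mu ≠ 0 := by nlinarith
    have hpi : (π:ℝ) ≠ 0 := Real.pi_ne_zero
    have hcA : 2*mu*(-α₂) + (lam+mu)*(α₁ + -α₂) = 0 := by
      rw [hα₁, hα₂]
      field_simp
      ring
    have hcB : 2*mu*α₂ + (lam+mu)*(-α₁ + α₂) = 0 := by linarith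
    have hS : ∀ᶠ q : ℝ × ℝ in nhds p, (q.1+a)^2+q.2^2 ≠ 0 ∧ (q.1-a)^2+q.2^2 ≠ 0 := by
      have c1 : ContinuousAt (fun q : ℝ × ℝ => (q.1+a)^2+q.2^2) p := by fun_prop
      have c2 : ContinuousAt (fun q : ℝ × ℝ => (q.1-a)^2+q.2^2) p := by fun_prop
      exact (c1.eventually_ne h1).and (c2.eventually_ne h2)
    have hev0 : pd 0 (q1c α₁ α₂ a 0) =ᶠ[nhds p]
        (fun q : ℝ × ℝ => sgG0s α₁ (-α₂) (α₂*a) (q.1+a) q.2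
          + sgG0s (-α₁) α₂ (α₂*a) (q.1-a) q.2) := by
      filter_upwards [hS] with q hq
      rw [sg_q1c0]
      exact sgp_pd0_G0 a α₁ (-α₂) (α₂*a) (-α₁) α₂ (α₂*a) q hq.1 hq.2
    have hev1 : pd 1 (q1c α₁ α₂ a 0) =ᶠ[nhds p]
        (fun q : ℝ × ℝ => sgG0y α₁ (-α₂) (α₂*a) (q.1+a) q.2
          + sgG0y (-α₁) α₂ (α₂*a) (q.1-a) q.2) := by
      filter_upwards [hS] with q hq
      rw [sg_q1c0]
      exact sgp_pd1_G0 a α₁ (-α₂) (α₂*a) (-α₁) α₂ (α₂*a) q hq.1 hq.2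
    have hev2 : pd 0 (q1c α₁ α₂ a 1) =ᶠ[nhds p]
        (fun q : ℝ × ℝ => sgG1s (-α₂) (α₂*a) (q.1+a) q.2
          + sgG1s α₂ (α₂*a) (q.1-a) q.2) := by
      filter_upwards [hS] with q hq
      rw [sg_q1c1]
      exact sgp_pd0_G1 a (-α₂) (α₂*a) α₂ (α₂*a) q hq.1 hq.2
    have hev3 : pd 1 (q1c α₁ α₂ a 1) =ᶠ[nhds p]
        (fun q : ℝ × ℝ => sgG1y (-α₂) (α₂*a) (q.1+a) q.2
          + sgG1y α₂ (α₂*a) (q.1-a) q.2) := by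
      filter_upwards [hS] with q hq
      rw [sg_q1c1]
      exact sgp_pd1_G1 a (-α₂) (α₂*a) α₂ (α₂*a) q hq.1 hq.2
    have hevdiv : (fun q => pd 0 (q1c α₁ α₂ a 0) q + pd 1 (q1c α₁ α₂ a 1) q) =ᶠ[nhds p]
        (fun q : ℝ × ℝ => (sgG0s α₁ (-α₂) (α₂*a) (q.1+a) q.2
            + sgG0s (-α₁) α₂ (α₂*a) (q.1-a) q.2)
          + (sgG1y (-α₂) (α₂*a) (q.1+a) q.2 + sgG1y α₂ (α₂*a) (q.1-a) q.2)) := by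
      filter_upwards [hev0, hev3] with q e0 e3
      rw [e0, e3]
    have E1 : pd 0 (pd 0 (q1c α₁ α₂ a 0)) p
        = sgH1 α₁ (-α₂) (α₂*a) (p.1+a) p.2 + sgH1 (-α₁) α₂ (α₂*a) (p.1-a) p.2 := by
      rw [sg_pd_congr 0 hev0]
      exact sgp_pd0_G0s a α₁ (-α₂) (α₂*a) (-α₁) α₂ (α₂*a) p h1 h2
    have E2 : pd 1 (pd 1 (q1c α₁ α₂ a 0)) p
        = sgH2 α₁ (-α₂) (α₂*a) (p.1+a) p.2 + sgH2 (-α₁) α₂ (α₂*a) (p.1-a) p.2 := by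
      rw [sg_pd_congr 1 hev1]
      exact sgp_pd1_G0y a α₁ (-α₂) (α₂*a) (-α₁) α₂ (α₂*a) p h1 h2
    have E3 : pd 0 (pd 0 (q1c α₁ α₂ a 1)) p
        = sgH3 (-α₂) (α₂*a) (p.1+a) p.2 + sgH3 α₂ (α₂*a) (p.1-a) p.2 := by
      rw [sg_pd_congr 0 hev2]
      exact sgp_pd0_G1s a (-α₂) (α₂*a) α₂ (α₂*a) p h1 h2
    have E4 : pd 1 (pd 1 (q1c α₁ α₂ a 1)) p
        = sgH4 (-α₂) (α₂*a) (p.1+a) p.2 + sgH4 α₂ (α₂*a) (p.1-a) p.2 := by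
      rw [sg_pd_congr 1 hev3]
      exact sgp_pd1_G1y a (-α₂) (α₂*a) α₂ (α₂*a) p h1 h2
    have E5 : pd 0 (fun q => pd 0 (q1c α₁ α₂ a 0) q + pd 1 (q1c α₁ α₂ a 1) q) p
        = (sgH1 α₁ (-α₂) (α₂*a) (p.1+a) p.2 + sgH1 (-α₁) α₂ (α₂*a) (p.1-a) p.2)
          + (sgH6 (-α₂) (α₂*a) (p.1+a) p.2 + sgH6 α₂ (α₂*a) (p.1-a) p.2) := by
      rw [sg_pd_congr 0 hevdiv]
      exact sgp_pd0_div a α₁ (-α₂) (α₂*a) (-α₁) α₂ (α₂*a) p h1 h2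
    have E6 : pd 1 (fun q => pd 0 (q1c α₁ α₂ a 0) q + pd 1 (q1c α₁ α₂ a 1) q) p
        = (sgH5 α₁ (-α₂) (α₂*a) (p.1+a) p.2 + sgH5 (-α₁) α₂ (α₂*a) (p.1-a) p.2)
          + (sgH4 (-α₂) (α₂*a) (p.1+a) p.2 + sgH4 α₂ (α₂*a) (p.1-a) p.2) := by
      rw [sg_pd_congr 1 hevdiv]
      exact sgp_pd1_div a α₁ (-α₂) (α₂*a) (-α₁) α₂ (α₂*a) p h1 h2
    fin_cases i
    · simp only [Fin.zero_eta, Fin.isValue]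
      rw [E1, E2, E5]
      have LA := sg_lame0 lam mu α₁ (-α₂) (α₂*a) (p.1+a) p.2 h1 hcA
      have LB := sg_lame0 lam mu (-α₁) α₂ (α₂*a) (p.1-a) p.2 h2 hcB
      linarith
    · simp only [Fin.mk_one, Fin.isValue]
      rw [E3, E4, E6]
      have LA := sg_lame1 lam mu α₁ (-α₂) (α₂*a) (p.1+a) p.2 h1 hcA
      have LB := sg_lame1 lam mu (-α₁) α₂ (α₂*a) (p.1-a) p.2 h2 hcB
      linarith

set_option maxHeartbeats 1000000 in
lemma sg_decay (α₁ α₂ a : ℝ) (ha : 0 < a) :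
    ∀ p : ℝ × ℝ, 16*a + 1 ≤ Real.sqrt (nsq p) →
        Real.sqrt ((q1c α₁ α₂ a 0 p) ^ 2 + (q1c α₁ α₂ a 1 p) ^ 2)
          ≤ (4*abs α₁*a + 52*abs α₂*a + 1) / Real.sqrt (nsq p) := by
    intro p hp
    obtain ⟨x, y⟩ := p
    have hnsq0 : (0:ℝ) ≤ nsq (x, y) := by simp only [nsq]; positivity
    set n := Real.sqrt (nsq (x, y)) with hndef
    clear_value n
    have hn0 : 0 < n := lt_of_lt_of_le (by linarith) hp
    have hnsq : n^2 = x^2 + y^2 := by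
      rw [hndef, Real.sq_sqrt hnsq0]
      rfl
    have hxn : |x| ≤ n := by
      rw [hndef, ← Real.sqrt_sq_eq_abs]
      exact Real.sqrt_le_sqrt (by simp only [nsq]; nlinarith [sq_nonneg y])
    have hyn : |y| ≤ n := by
      rw [hndef, ← Real.sqrt_sq_eq_abs]
      exact Real.sqrt_le_sqrt (by simp only [nsq]; nlinarith [sq_nonneg x])
    have hx1 : x ≤ n := le_trans (le_abs_self _) hxn
    have hx2 : -n ≤ x := by have := neg_abs_le x; linarith
    have hy1 : y ≤ n := le_trans (le_abs_self _) hyn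
    have hx2n : x^2 ≤ n^2 := by linarith [sq_nonneg y, hnsq]
    have hy2n : y^2 ≤ n^2 := by linarith [sq_nonneg x, hnsq]
    have h16 : 16*a + 1 ≤ n := hp
    have han : a ≤ n := by linarith
    have ha4 : (0:ℝ) ≤ 4*a := by linarith
    have hr1 : n^2/2 ≤ (x+a)^2 + y^2 := by
      have hexp : (x+a)^2 + y^2 = n^2 + 2*a*x + a^2 := by rw [hnsq]; ring
      have t1 : (2*a)*(-n) ≤ (2*a)*x := mul_le_mul_of_nonneg_left hx2 (by linarith)
      have t2 : (4*a)*n ≤ n*n := mul_le_mul_of_nonneg_right (by linarith) hn0.le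
      rw [hexp]
      linarith [t1, t2, sq_nonneg a]
    have hr2 : n^2/2 ≤ (x-a)^2 + y^2 := by
      have hexp : (x-a)^2 + y^2 = n^2 - 2*a*x + a^2 := by rw [hnsq]; ring
      have t1 : (2*a)*x ≤ (2*a)*n := mul_le_mul_of_nonneg_left hx1 (by linarith)
      have t2 : (4*a)*n ≤ n*n := mul_le_mul_of_nonneg_right (by linarith) hn0.le
      rw [hexp]
      linarith [t1, t2, sq_nonneg a]
    have hn22 : (0:ℝ) < n^2/2 := half_pos (pow_pos hn0 2)
    have hr10 : (0:ℝ) < (x+a)^2 + y^2 := lt_of_lt_of_le hn22 hr1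
    have hr20 : (0:ℝ) < (x-a)^2 + y^2 := lt_of_lt_of_le hn22 hr2
    have hr12 : n^2/2*(n^2/2) ≤ ((x+a)^2 + y^2)*((x-a)^2 + y^2) :=
      mul_le_mul hr1 hr2 hn22.le (le_trans hn22.le hr1)
    have hlog : |Real.log ((x+a)^2 + y^2) - Real.log ((x-a)^2 + y^2)| ≤ 8*a/n := by
      have hub : Real.log ((x+a)^2 + y^2) - Real.log ((x-a)^2 + y^2) ≤ 8*a/n := by
        have h := Real.log_le_sub_one_of_pos (div_pos hr10 hr20)
        rw [Real.log_div hr10.ne' hr20.ne'] at h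
        have e : ((x+a)^2 + y^2)/((x-a)^2 + y^2) - 1 = 4*a*x/((x-a)^2 + y^2) := by
          field_simp; ring
        rw [e] at h
        refine le_trans h ?_
        rw [div_le_div_iff₀ hr20 hn0]
        have u1 : (4*a)*(x*n) ≤ (4*a)*(n*n) :=
          mul_le_mul_of_nonneg_left (mul_le_mul_of_nonneg_right hx1 hn0.le) ha4
        have u2 : (8*a)*(n^2/2) ≤ (8*a)*((x-a)^2 + y^2) :=
          mul_le_mul_of_nonneg_left hr2 (by linarith)
        linarith [u1, u2]
      have hlb : Real.log ((x-a)^2 + y^2) - Real.log ((x+a)^2 + y^2) ≤ 8*a/n := by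
        have h := Real.log_le_sub_one_of_pos (div_pos hr20 hr10)
        rw [Real.log_div hr20.ne' hr10.ne'] at h
        have e : ((x-a)^2 + y^2)/((x+a)^2 + y^2) - 1 = -(4*a*x)/((x+a)^2 + y^2) := by
          field_simp; ring
        rw [e] at h
        refine le_trans h ?_
        rw [div_le_div_iff₀ hr10 hn0]
        have u1 : (4*a)*((-x)*n) ≤ (4*a)*(n*n) :=
          mul_le_mul_of_nonneg_left
            (mul_le_mul_of_nonneg_right (by linarith : -x ≤ n) hn0.le) ha4
        have u2 : (8*a)*(n^2/2) ≤ (8*a)*((x+a)^2 + y^2) :=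
          mul_le_mul_of_nonneg_left hr1 (by linarith)
        linarith [u1, u2]
      rw [abs_le]
      constructor <;> linarith
    have hsq : |(x+a)^2/((x+a)^2 + y^2) - (x-a)^2/((x-a)^2 + y^2)| ≤ 16*a/n := by
      have e : (x+a)^2/((x+a)^2 + y^2) - (x-a)^2/((x-a)^2 + y^2)
          = 4*a*x*y^2/(((x+a)^2 + y^2)*((x-a)^2 + y^2)) := by
        field_simp; ring
      rw [e, abs_div, abs_of_pos (mul_pos hr10 hr20), div_le_div_iff₀ (mul_pos hr10 hr20) hn0]
      have habs : |4*a*x*y^2| ≤ 4*a*n*n^2 := by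
        have e2 : |4*a*x*y^2| = 4*a* |x| *y^2 := by
          rw [abs_mul, abs_mul, abs_of_nonneg ha4, abs_of_nonneg (sq_nonneg y)]
        rw [e2]
        have v1 : (4*a)*(|x| * y^2) ≤ (4*a)*(n*y^2) :=
          mul_le_mul_of_nonneg_left (mul_le_mul_of_nonneg_right hxn (sq_nonneg y)) ha4
        have v2 : (4*a*n)*(y^2) ≤ (4*a*n)*(n^2) :=
          mul_le_mul_of_nonneg_left hy2n (mul_nonneg ha4 hn0.le)
        linarith [v1, v2]
      have w1 : |4*a*x*y^2| * n ≤ (4*a*n*n^2)*n := mul_le_mul_of_nonneg_right habs hn0.le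
      have w2 : (16*a)*(n^2/2*(n^2/2)) ≤ (16*a)*(((x+a)^2 + y^2)*((x-a)^2 + y^2)) :=
        mul_le_mul_of_nonneg_left hr12 (by linarith)
      linarith [w1, w2]
    have hcor0 : |(x+a)/((x+a)^2 + y^2) + (x-a)/((x-a)^2 + y^2)| ≤ 8/n := by
      have b1 : |(x+a)/((x+a)^2 + y^2)| ≤ 4/n := by
        rw [abs_div, abs_of_pos hr10, div_le_div_iff₀ hr10 hn0]
        have hxa : |x+a| ≤ 2*n := le_trans (abs_add_le x a) (by rw [abs_of_pos ha]; linarith)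
        have z1 : |x+a| * n ≤ (2*n)*n := mul_le_mul_of_nonneg_right hxa hn0.le
        linarith [z1, hr1]
      have b2 : |(x-a)/((x-a)^2 + y^2)| ≤ 4/n := by
        rw [abs_div, abs_of_pos hr20, div_le_div_iff₀ hr20 hn0]
        have hxa : |x-a| ≤ 2*n := le_trans (abs_sub x a) (by rw [abs_of_pos ha]; linarith)
        have z1 : |x-a| * n ≤ (2*n)*n := mul_le_mul_of_nonneg_right hxa hn0.le
        linarith [z1, hr2]
      calc |(x+a)/((x+a)^2 + y^2) + (x-a)/((x-a)^2 + y^2)|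
          ≤ |(x+a)/((x+a)^2 + y^2)| + |(x-a)/((x-a)^2 + y^2)| := abs_add_le _ _
        _ ≤ 4/n + 4/n := add_le_add b1 b2
        _ = 8/n := by ring
    have hq1a : |y*((x+a)/((x+a)^2 + y^2) - (x-a)/((x-a)^2 + y^2))| ≤ 24*a/n := by
      have e : y*((x+a)/((x+a)^2 + y^2) - (x-a)/((x-a)^2 + y^2))
          = 2*a*y*(y^2 - x^2 + a^2)/(((x+a)^2 + y^2)*((x-a)^2 + y^2)) := by
        field_simp; ring
      rw [e, abs_div, abs_of_pos (mul_pos hr10 hr20), div_le_div_iff₀ (mul_pos hr10 hr20) hn0]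
      have hmid : |y^2 - x^2 + a^2| ≤ 3*n^2 := by
        rw [abs_le]
        constructor
        · linarith [hx2n, sq_nonneg y, sq_nonneg a, sq_nonneg n]
        · have m1 : a*a ≤ n*n := mul_le_mul han han ha.le hn0.le
          nlinarith [hy2n, sq_nonneg x, m1]
      have habs : |2*a*y*(y^2 - x^2 + a^2)| ≤ 2*a*n*(3*n^2) := by
        have e2 : |2*a*y*(y^2 - x^2 + a^2)| = 2*a* |y| * |y^2 - x^2 + a^2| := by
          rw [abs_mul, abs_mul, abs_of_nonneg (by linarith : (0:ℝ) ≤ 2*a)]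
        rw [e2]
        have p1 : (2*a)*(|y| * |y^2 - x^2 + a^2|) ≤ (2*a)*(n* |y^2 - x^2 + a^2|) :=
          mul_le_mul_of_nonneg_left
            (mul_le_mul_of_nonneg_right hyn (abs_nonneg _)) (by linarith)
        have p2 : (2*a*n)*(|y^2 - x^2 + a^2|) ≤ (2*a*n)*(3*n^2) :=
          mul_le_mul_of_nonneg_left hmid (by nlinarith [mul_nonneg ha.le hn0.le])
        linarith [p1, p2]
      have w1 : |2*a*y*(y^2 - x^2 + a^2)| * n ≤ (2*a*n*(3*n^2))*n :=
        mul_le_mul_of_nonneg_right habs hn0.le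
      have w2 : (24*a)*(n^2/2*(n^2/2)) ≤ (24*a)*(((x+a)^2 + y^2)*((x-a)^2 + y^2)) :=
        mul_le_mul_of_nonneg_left hr12 (by linarith)
      linarith [w1, w2]
    have hq1b : |y/((x+a)^2 + y^2) + y/((x-a)^2 + y^2)| ≤ 4/n := by
      have b1 : |y/((x+a)^2 + y^2)| ≤ 2/n := by
        rw [abs_div, abs_of_pos hr10, div_le_div_iff₀ hr10 hn0]
        have z1 : |y| * n ≤ n*n := mul_le_mul_of_nonneg_right hyn hn0.le
        linarith [z1, hr1]
      have b2 : |y/((x-a)^2 + y^2)| ≤ 2/n := by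
        rw [abs_div, abs_of_pos hr20, div_le_div_iff₀ hr20 hn0]
        have z1 : |y| * n ≤ n*n := mul_le_mul_of_nonneg_right hyn hn0.le
        linarith [z1, hr2]
      calc |y/((x+a)^2 + y^2) + y/((x-a)^2 + y^2)|
          ≤ |y/((x+a)^2 + y^2)| + |y/((x-a)^2 + y^2)| := abs_add_le _ _
        _ ≤ 2/n + 2/n := add_le_add b1 b2
        _ = 4/n := by ring
    have e0 : q1c α₁ α₂ a 0 (x, y)
        = α₁*(Real.log ((x+a)^2 + y^2) - Real.log ((x-a)^2 + y^2))/2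
          + (-α₂)*((x+a)^2/((x+a)^2 + y^2) - (x-a)^2/((x-a)^2 + y^2))
          + α₂*a*((x+a)/((x+a)^2 + y^2) + (x-a)/((x-a)^2 + y^2)) := by
      rw [sg_q1c0]
      simp only [sgG0]
      ring
    have e1 : q1c α₁ α₂ a 1 (x, y)
        = (-α₂)*(y*((x+a)/((x+a)^2 + y^2) - (x-a)/((x-a)^2 + y^2)))
          + α₂*a*(y/((x+a)^2 + y^2) + y/((x-a)^2 + y^2)) := by
      rw [sg_q1c1]
      simp only [sgG1]
      ring
    have hb0 : |q1c α₁ α₂ a 0 (x, y)| ≤ (4* |α₁| *a + 24* |α₂| *a)/n := by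
      rw [e0]
      have bA : |α₁*(Real.log ((x+a)^2 + y^2) - Real.log ((x-a)^2 + y^2))/2|
          ≤ |α₁| *(8*a/n)/2 := by
        rw [abs_div, abs_mul, (by norm_num : |(2:ℝ)| = 2)]
        gcongr
      have bB : |(-α₂)*((x+a)^2/((x+a)^2 + y^2) - (x-a)^2/((x-a)^2 + y^2))|
          ≤ |α₂| *(16*a/n) := by
        rw [abs_mul, abs_neg]
        gcongr
      have bC : |α₂*a*((x+a)/((x+a)^2 + y^2) + (x-a)/((x-a)^2 + y^2))|
          ≤ |α₂| *a*(8/n) := by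
        rw [abs_mul, abs_mul, abs_of_pos ha]
        gcongr
      have heq : |α₁| *(8*a/n)/2 + |α₂| *(16*a/n) + |α₂| *a*(8/n)
          = (4* |α₁| *a + 24* |α₂| *a)/n := by
        field_simp
        ring
      refine le_trans (abs_add_le _ _) ?_
      refine le_trans (add_le_add_left (abs_add_le _ _) _) ?_
      linarith [bA, bB, bC]
    have hb1 : |q1c α₁ α₂ a 1 (x, y)| ≤ (28* |α₂| *a)/n := by
      rw [e1]
      have bD : |(-α₂)*(y*((x+a)/((x+a)^2 + y^2) - (x-a)/((x-a)^2 + y^2)))|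
          ≤ |α₂| *(24*a/n) := by
        rw [abs_mul, abs_neg]
        gcongr
      have bE : |α₂*a*(y/((x+a)^2 + y^2) + y/((x-a)^2 + y^2))| ≤ |α₂| *a*(4/n) := by
        rw [abs_mul, abs_mul, abs_of_pos ha]
        gcongr
      have heq : |α₂| *(24*a/n) + |α₂| *a*(4/n) = (28* |α₂| *a)/n := by
        field_simp
        ring
      refine le_trans (abs_add_le _ _) ?_
      linarith [bD, bE]
    have hs : Real.sqrt ((q1c α₁ α₂ a 0 (x, y))^2 + (q1c α₁ α₂ a 1 (x, y))^2)
        ≤ |q1c α₁ α₂ a 0 (x, y)| + |q1c α₁ α₂ a 1 (x, y)| := by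
      have hle : (q1c α₁ α₂ a 0 (x, y))^2 + (q1c α₁ α₂ a 1 (x, y))^2
          ≤ (|q1c α₁ α₂ a 0 (x, y)| + |q1c α₁ α₂ a 1 (x, y)|)^2 := by
        have e : (|q1c α₁ α₂ a 0 (x, y)| + |q1c α₁ α₂ a 1 (x, y)|)^2
            = |q1c α₁ α₂ a 0 (x, y)|^2
              + 2*(|q1c α₁ α₂ a 0 (x, y)| * |q1c α₁ α₂ a 1 (x, y)|)
              + |q1c α₁ α₂ a 1 (x, y)|^2 := by ring
        rw [e, sq_abs, sq_abs]
        linarith [mul_nonneg (abs_nonneg (q1c α₁ α₂ a 0 (x, y)))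
          (abs_nonneg (q1c α₁ α₂ a 1 (x, y)))]
      calc Real.sqrt ((q1c α₁ α₂ a 0 (x, y))^2 + (q1c α₁ α₂ a 1 (x, y))^2)
          ≤ Real.sqrt ((|q1c α₁ α₂ a 0 (x, y)| + |q1c α₁ α₂ a 1 (x, y)|)^2) :=
            Real.sqrt_le_sqrt hle
        _ = |q1c α₁ α₂ a 0 (x, y)| + |q1c α₁ α₂ a 1 (x, y)| :=
            Real.sqrt_sq (by positivity)
    refine le_trans hs ?_
    calc |q1c α₁ α₂ a 0 (x, y)| + |q1c α₁ α₂ a 1 (x, y)|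
        ≤ (4* |α₁| *a + 24* |α₂| *a)/n + (28* |α₂| *a)/n := add_le_add hb0 hb1
      _ = (4* |α₁| *a + 52* |α₂| *a)/n := by ring
      _ ≤ (4* |α₁| *a + 52* |α₂| *a + 1)/n := by
          exact (div_le_div_iff_of_pos_right hn0).mpr (by linarith)

/-- `q₁` solves the Lamé system on `ℝ² \ {p₁, p₂}` and decays like `|x|⁻¹` at infinity. -/
theorem stmt8 (lam mu α₁ α₂ a : ℝ) (hmu : 0 < mu) (hlm : 0 < lam + mu) (ha : 0 < a)
    (hα₁ : α₁ = (1 / (4 * π)) * (1 / mu + 1 / (lam + 2 * mu)))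
    (hα₂ : α₂ = (1 / (4 * π)) * (1 / mu - 1 / (lam + 2 * mu))) :
    (∀ p : ℝ × ℝ, p ≠ ((-a : ℝ), (0 : ℝ)) → p ≠ ((a : ℝ), (0 : ℝ)) → ∀ i : Fin 2,
        mu * (pd 0 (pd 0 (q1c α₁ α₂ a i)) p + pd 1 (pd 1 (q1c α₁ α₂ a i)) p)
          + (lam + mu)
            * pd i (fun q => pd 0 (q1c α₁ α₂ a 0) q + pd 1 (q1c α₁ α₂ a 1) q) p = 0)
    ∧ ∃ C > (0:ℝ), ∃ R > (0:ℝ), ∀ p : ℝ × ℝ, R ≤ Real.sqrt (nsq p) →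
        Real.sqrt ((q1c α₁ α₂ a 0 p) ^ 2 + (q1c α₁ α₂ a 1 p) ^ 2)
          ≤ C / Real.sqrt (nsq p) := by
  constructor
  · exact sg_pde lam mu α₁ α₂ a hmu hlm ha hα₁ hα₂
  · exact ⟨4*abs α₁*a + 52*abs α₂*a + 1,
      by nlinarith [mul_nonneg (abs_nonneg α₁) ha.le, mul_nonneg (abs_nonneg α₂) ha.le],
      16*a + 1, by linarith, sg_decay α₁ α₂ a ha⟩
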